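/- Suppose premiums are adjusted according to aggregate reported claims. Then for every i ∈ {1,…,l}, every integer z with 0 < z ≤ c_i and every n ≥ 1: ψ'_i(0;z,n+1) = Σ_{j=1}^l Σ_{x=0}^{c_i−z} Σ_{y=0}^{c_i−z−x} t_{ij}(x+y)·ψ_j(c_i−z−x−y, n)·f_{XY}(x,y) + q·Σ_{j=1}^l Σ_{y=1}^{c_j} t_{ij}(c_i−z+y)·ψ'_j(0;y,n)·ξ_y(c_i−z) + q·Σ_{j=1}^l Σ_{y=c_j+1}^∞ t_{ij}(c_i−z+y)·ξ_y(c_i−z) + (1−q)·Σ_{y=1}^∞ ξ_y(c_i−z) + Σ_{x=c_i−z+1}^∞ f_X(x), and moreover ψ'_i(0;z,1) = (1−q)·Σ_{y=1}^∞ ξ_y(c_i−z) + Σ_{x=c_i−z+1}^∞ f_X(x). -/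

import Mathlib

open scoped BigOperators

noncomputable section

namespace DelayedClaims

/-- Marginal pmf of the main claim: `f_X(x) = Σ_y f_{XY}(x,y)`. -/
def fX (f : ℕ → ℕ → ℝ) (x : ℕ) : ℝ := ∑' y : ℕ, f x y

/-- `ξ_y(m) = Σ_{x=1}^m f_{XY}(x, y + m - x)`. -/
def xi (f : ℕ → ℕ → ℝ) (y m : ℕ) : ℝ := ∑ x ∈ Finset.Icc 1 m, f x (y + m - x)

/-- Probability weight of a single period outcome `(x, y, d)`:
`d = true` means the settlement of the by-claim `y` is delayed (probability `q`). -/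
def w (f : ℕ → ℕ → ℝ) (q : ℝ) (p : ℕ × ℕ × Bool) : ℝ :=
  f p.1 p.2.1 * (if p.2.2 then q else 1 - q)

/-- Probability weight of an `n`-period path of i.i.d. period outcomes. -/
def pathWeight (f : ℕ → ℕ → ℝ) (q : ℝ) (n : ℕ) (ω : Fin n → ℕ × ℕ × Bool) : ℝ :=
  ∏ s : Fin n, w f q (ω s)

/-- Ruin indicator along a path.  Here `c` lists the premium levels,
`T i s` is the premium level following level `i` when the period adjustment
statistic equals `s`, `stat x y d carry` is the period adjustment statistic,
`i` is the current premium level, `u` the current surplus, and `carry` the amount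
of the by-claim whose settlement was delayed from the previous period (`0` if none).
In each period the premium `c i` is received up front and the settled amount
`x + (1-d)·y + carry` is paid at the end of the period; ruin occurs as soon as
the surplus becomes negative at the end of some period. -/
def ruined (l : ℕ) (c : Fin l → ℕ) (T : Fin l → ℕ → Fin l)
    (stat : ℕ → ℕ → Bool → ℕ → ℕ) :
    (n : ℕ) → (Fin n → ℕ × ℕ × Bool) → Fin l → ℤ → ℕ → Bool
  | 0, _, _, _, _ => false
  | n + 1, ω, i, u, carry =>
    let x : ℕ := (ω 0).1
    let y : ℕ := (ω 0).2.1
    let d : Bool := (ω 0).2.2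
    let u' : ℤ := u + (c i : ℤ) - ((x : ℤ) + (if d then 0 else (y : ℤ)) + (carry : ℤ))
    if u' < 0 then true
    else ruined l c T stat n (fun s => ω s.succ) (T i (stat x y d carry)) u'
      (if d then y else 0)

/-- `ψ'_i(u; z, n)`: the finite-time ruin probability over horizon `n` of the model with
an up-front delayed by-claim `z` settled at the end of period 1 (taking `z = 0` gives the
model without an up-front delayed by-claim), with initial premium level `i` and
initial surplus `u`.  By convention it equals `1` for `u < 0` and `0` for `n = 0`. -/
def psiAux (l : ℕ) (c : Fin l → ℕ) (T : Fin l → ℕ → Fin l)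
    (stat : ℕ → ℕ → Bool → ℕ → ℕ) (f : ℕ → ℕ → ℝ) (q : ℝ)
    (i : Fin l) (u : ℤ) (z : ℕ) (n : ℕ) : ℝ :=
  if u < 0 then 1
  else ∑' ω : Fin n → ℕ × ℕ × Bool,
    pathWeight f q n ω * (if ruined l c T stat n ω i u z then 1 else 0)

/-- `ψ_i(u, n)`: finite-time ruin probability without an up-front delayed by-claim. -/
def psi (l : ℕ) (c : Fin l → ℕ) (T : Fin l → ℕ → Fin l)
    (stat : ℕ → ℕ → Bool → ℕ → ℕ) (f : ℕ → ℕ → ℝ) (q : ℝ)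
    (i : Fin l) (u : ℤ) (n : ℕ) : ℝ :=
  psiAux l c T stat f q i u 0 n

/-- Adjustment statistic: aggregate reported claims `X + Y`. -/
def statRep (x y : ℕ) (_ : Bool) (_ : ℕ) : ℕ := x + y

/-- Adjustment statistic: aggregate settled claims `X + (1-D)·Y + carry`. -/
def statSet (x y : ℕ) (d : Bool) (carry : ℕ) : ℕ := x + (if d then 0 else y) + carry

/-- Adjustment statistic: reported number of claims `1{X>0} + 1{Y>0}`. -/
def statRepN (x y : ℕ) (_ : Bool) (_ : ℕ) : ℕ :=
  (if 0 < x then 1 else 0) + (if 0 < y then 1 else 0)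

/-- Adjustment statistic: settled number of claims
`1{X>0} + 1{Y>0 and not delayed} + 1{delayed by-claim from the previous period}`. -/
def statSetN (x y : ℕ) (d : Bool) (carry : ℕ) : ℕ :=
  (if 0 < x then 1 else 0) + (if 0 < y ∧ d = false then 1 else 0) +
    (if 0 < carry then 1 else 0)

section Basics
variable {f : ℕ → ℕ → ℝ} {q : ℝ}

lemma summable_f2 (hfsum : ∑' p : ℕ × ℕ, f p.1 p.2 = 1) :
    Summable (fun p : ℕ × ℕ => f p.1 p.2) := by
  by_contra h
  rw [tsum_eq_zero_of_not_summable h] at hfsum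
  norm_num at hfsum

lemma summable_fx (hfsum : ∑' p : ℕ × ℕ, f p.1 p.2 = 1) (x : ℕ) : Summable (f x) := by
  have := (summable_f2 hfsum).comp_injective
    (i := fun y => ((x, y) : ℕ × ℕ))
    (fun a b h => by simpa using congrArg Prod.snd h)
  exact this

lemma w_nonneg (hfnn : ∀ x y, 0 ≤ f x y) (hq0 : 0 ≤ q) (hq1 : q ≤ 1)
    (p : ℕ × ℕ × Bool) : 0 ≤ w f q p := by
  unfold w
  have : (0:ℝ) ≤ (if p.2.2 then q else 1 - q) := by split <;> linarith
  exact mul_nonneg (hfnn _ _) this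

lemma summable_w (hfnn : ∀ x y, 0 ≤ f x y) (hfsum : ∑' p : ℕ × ℕ, f p.1 p.2 = 1)
    (hq0 : 0 ≤ q) (hq1 : q ≤ 1) : Summable (w f q) := by
  have h2 : Summable (fun p : (ℕ × ℕ) × Bool => f p.1.1 p.1.2 * (if p.2 then q else 1 - q)) := by
    apply Summable.mul_of_nonneg (g := fun b : Bool => if b then q else 1 - q)
      (summable_f2 hfsum) (summable_of_finite_support (Set.toFinite _))
      (fun p => hfnn _ _) (fun b => by dsimp; split <;> linarith)
  rw [← (Equiv.prodAssoc ℕ ℕ Bool).summable_iff]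
  convert h2 using 1
  funext p; rfl

set_option maxHeartbeats 1000000 in
lemma tsum_w (hfnn : ∀ x y, 0 ≤ f x y) (hfsum : ∑' p : ℕ × ℕ, f p.1 p.2 = 1)
    (hq0 : 0 ≤ q) (hq1 : q ≤ 1) : ∑' p, w f q p = 1 := by
  have hs := summable_w hfnn hfsum hq0 hq1
  rw [← (Equiv.prodAssoc ℕ ℕ Bool).tsum_eq (w f q)]
  have h2 : ∀ p : (ℕ × ℕ) × Bool,
      w f q ((Equiv.prodAssoc ℕ ℕ Bool) p) = f p.1.1 p.1.2 * (if p.2 then q else 1 - q) :=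
    fun ⟨⟨x, y⟩, d⟩ => rfl
  have hs2 : Summable (fun p : (ℕ × ℕ) × Bool => w f q ((Equiv.prodAssoc ℕ ℕ Bool) p)) :=
    (Equiv.prodAssoc ℕ ℕ Bool).summable_iff.2 hs
  simp_rw [h2] at hs2 ⊢
  rw [Summable.tsum_prod' hs2 (fun p => summable_of_finite_support (Set.toFinite _))]
  simp_rw [tsum_bool]
  norm_num
  calc ∑' (b : ℕ × ℕ), (f b.1 b.2 * (1 - q) + f b.1 b.2 * q)
      = ∑' (b : ℕ × ℕ), f b.1 b.2 := tsum_congr fun b => by ring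
    _ = 1 := hfsum


def consEquiv (n : ℕ) : (ℕ×ℕ×Bool) × (Fin n → ℕ×ℕ×Bool) ≃ (Fin (n+1) → ℕ×ℕ×Bool) where
  toFun p := Fin.cons p.1 p.2
  invFun ω := (ω 0, fun s => ω s.succ)
  left_inv := by intro p; simp
  right_inv := by
    intro ω; funext s
    refine Fin.cases ?_ ?_ s <;> simp

lemma pathWeight_nonneg (hfnn : ∀ x y, 0 ≤ f x y) (hq0 : 0 ≤ q) (hq1 : q ≤ 1)
    (n : ℕ) (ω : Fin n → ℕ×ℕ×Bool) : 0 ≤ pathWeight f q n ω :=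
  Finset.prod_nonneg fun s _ => w_nonneg hfnn hq0 hq1 _

lemma pathWeight_succ (n : ℕ) (ω : Fin (n+1) → ℕ×ℕ×Bool) :
    pathWeight f q (n+1) ω = w f q (ω 0) * pathWeight f q n (fun s => ω s.succ) :=
  Fin.prod_univ_succ _

lemma pathWeight_cons (n : ℕ) (a : ℕ×ℕ×Bool) (ω : Fin n → ℕ×ℕ×Bool) :
    pathWeight f q (n+1) (Fin.cons a ω) = w f q a * pathWeight f q n ω := by
  rw [pathWeight_succ]
  simp [Fin.cons_zero, Fin.cons_succ]

lemma summable_pathWeight (hfnn : ∀ x y, 0 ≤ f x y) (hfsum : ∑' p : ℕ × ℕ, f p.1 p.2 = 1)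
    (hq0 : 0 ≤ q) (hq1 : q ≤ 1) : ∀ n, Summable (pathWeight f q n)
  | 0 => by
      have : Finite (Fin 0 → ℕ×ℕ×Bool) := by infer_instance
      exact Summable.of_finite
  | (n+1) => by
      rw [← (consEquiv n).summable_iff]
      have : (pathWeight f q (n+1)) ∘ (consEquiv n)
          = fun p : (ℕ×ℕ×Bool) × (Fin n → ℕ×ℕ×Bool) => w f q p.1 * pathWeight f q n p.2 := by
        funext p; exact pathWeight_cons n p.1 p.2
      rw [this]
      exact Summable.mul_of_nonneg (summable_w hfnn hfsum hq0 hq1)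
        (summable_pathWeight hfnn hfsum hq0 hq1 n)
        (w_nonneg hfnn hq0 hq1) (pathWeight_nonneg hfnn hq0 hq1 n)

set_option maxHeartbeats 2000000 in
lemma tsum_pathWeight (hfnn : ∀ x y, 0 ≤ f x y) (hfsum : ∑' p : ℕ × ℕ, f p.1 p.2 = 1)
    (hq0 : 0 ≤ q) (hq1 : q ≤ 1) : ∀ n, ∑' ω, pathWeight f q n ω = 1
  | 0 => by
      rw [tsum_eq_single (fun s => (0,0,false))]
      · simp [pathWeight]
      · intro ω h; exact absurd (Subsingleton.elim _ _) h
  | (n+1) => by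
      rw [← (consEquiv n).tsum_eq (pathWeight f q (n+1))]
      have he : ∀ p : (ℕ×ℕ×Bool) × (Fin n → ℕ×ℕ×Bool),
          pathWeight f q (n+1) ((consEquiv n) p) = w f q p.1 * pathWeight f q n p.2 :=
        fun p => pathWeight_cons n p.1 p.2
      simp_rw [he]
      have hs : Summable (fun p : (ℕ×ℕ×Bool) × (Fin n → ℕ×ℕ×Bool) =>
          w f q p.1 * pathWeight f q n p.2) :=
        Summable.mul_of_nonneg (summable_w hfnn hfsum hq0 hq1)
          (summable_pathWeight hfnn hfsum hq0 hq1 n)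
          (w_nonneg hfnn hq0 hq1) (pathWeight_nonneg hfnn hq0 hq1 n)
      rw [Summable.tsum_prod' hs (fun a => (summable_pathWeight hfnn hfsum hq0 hq1 n).mul_left (w f q a))]
      simp_rw [tsum_mul_left, tsum_pathWeight hfnn hfsum hq0 hq1 n, mul_one]
      exact tsum_w hfnn hfsum hq0 hq1

lemma summable_pw_ind (hfnn : ∀ x y, 0 ≤ f x y) (hfsum : ∑' p : ℕ × ℕ, f p.1 p.2 = 1)
    (hq0 : 0 ≤ q) (hq1 : q ≤ 1) (n : ℕ) (P : (Fin n → ℕ×ℕ×Bool) → Bool) :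
    Summable (fun ω => pathWeight f q n ω * (if P ω then (1:ℝ) else 0)) := by
  apply Summable.of_nonneg_of_le (fun ω => ?_) (fun ω => ?_)
    (summable_pathWeight hfnn hfsum hq0 hq1 n)
  · exact mul_nonneg (pathWeight_nonneg hfnn hq0 hq1 n ω) (by split <;> norm_num)
  · calc pathWeight f q n ω * (if P ω then (1:ℝ) else 0)
        ≤ pathWeight f q n ω * 1 := by
          apply mul_le_mul_of_nonneg_left (by split <;> norm_num)
            (pathWeight_nonneg hfnn hq0 hq1 n ω)
      _ = pathWeight f q n ω := mul_one _

end Basics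

section Master

lemma ite_nn1 {P : Prop} [Decidable P] : (0:ℝ) ≤ if P then 1 else 0 := by
  split <;> norm_num

lemma ite_le1' {P : Prop} [Decidable P] : (if P then (1:ℝ) else 0) ≤ 1 := by
  split <;> norm_num

lemma ite_nn2 {P Q : Prop} [Decidable P] [Decidable Q] :
    (0:ℝ) ≤ if P then 1 else if Q then 1 else 0 := by
  by_cases hP : P <;> by_cases hQ : Q <;> simp [hP, hQ]

lemma ite_le2 {P Q : Prop} [Decidable P] [Decidable Q] :
    (if P then (1:ℝ) else if Q then 1 else 0) ≤ 1 := by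
  by_cases hP : P <;> by_cases hQ : Q <;> simp [hP, hQ]
variable {f : ℕ → ℕ → ℝ} {q : ℝ} {l : ℕ} {c : Fin l → ℕ} {T : Fin l → ℕ → Fin l}
  {stat : ℕ → ℕ → Bool → ℕ → ℕ}

/-- surplus after one period -/
def nxt (c : Fin l → ℕ) (i : Fin l) (u : ℤ) (z : ℕ) (a : ℕ × ℕ × Bool) : ℤ :=
  u + (c i : ℤ) - ((a.1 : ℤ) + (if a.2.2 then 0 else (a.2.1 : ℤ)) + (z : ℤ))

lemma ruined_cons (n : ℕ) (a : ℕ×ℕ×Bool) (ω : Fin n → ℕ×ℕ×Bool) (i : Fin l) (u : ℤ) (z : ℕ) :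
    ruined l c T stat (n+1) (Fin.cons a ω) i u z =
      (if nxt c i u z a < 0 then true
       else ruined l c T stat n ω (T i (stat a.1 a.2.1 a.2.2 z)) (nxt c i u z a)
         (if a.2.2 then a.2.1 else 0)) := by
  simp only [ruined, Fin.cons_zero, Fin.cons_succ, nxt]
  rfl

lemma psiAux_nonneg (hfnn : ∀ x y, 0 ≤ f x y) (hq0 : 0 ≤ q) (hq1 : q ≤ 1)
    (i : Fin l) (u : ℤ) (z n : ℕ) : 0 ≤ psiAux l c T stat f q i u z n := by
  unfold psiAux
  split
  · norm_num
  · exact tsum_nonneg fun ω => mul_nonneg (pathWeight_nonneg hfnn hq0 hq1 n ω)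
      (by split <;> norm_num)

lemma psiAux_le_one (hfnn : ∀ x y, 0 ≤ f x y) (hfsum : ∑' p : ℕ × ℕ, f p.1 p.2 = 1)
    (hq0 : 0 ≤ q) (hq1 : q ≤ 1)
    (i : Fin l) (u : ℤ) (z n : ℕ) : psiAux l c T stat f q i u z n ≤ 1 := by
  unfold psiAux
  split
  · norm_num
  · calc (∑' ω : Fin n → ℕ×ℕ×Bool,
        pathWeight f q n ω * (if ruined l c T stat n ω i u z then 1 else 0))
        ≤ ∑' ω : Fin n → ℕ×ℕ×Bool, pathWeight f q n ω := by
          apply Summable.tsum_le_tsum _ (summable_pw_ind hfnn hfsum hq0 hq1 n _)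
            (summable_pathWeight hfnn hfsum hq0 hq1 n)
          intro ω
          calc pathWeight f q n ω * (if ruined l c T stat n ω i u z then 1 else 0)
              ≤ pathWeight f q n ω * 1 := mul_le_mul_of_nonneg_left ite_le1'
                (pathWeight_nonneg hfnn hq0 hq1 n ω)
            _ = pathWeight f q n ω := mul_one _
      _ = 1 := tsum_pathWeight hfnn hfsum hq0 hq1 n

lemma psiAux_zero (i : Fin l) (u : ℤ) (hu : 0 ≤ u) (z : ℕ) :
    psiAux l c T stat f q i u z 0 = 0 := by
  unfold psiAux
  rw [if_neg (not_lt.2 hu)]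
  simp [ruined]

set_option maxHeartbeats 2000000 in
lemma psiAux_succ (hfnn : ∀ x y, 0 ≤ f x y) (hfsum : ∑' p : ℕ × ℕ, f p.1 p.2 = 1)
    (hq0 : 0 ≤ q) (hq1 : q ≤ 1)
    (i : Fin l) (u : ℤ) (hu : 0 ≤ u) (z n : ℕ) :
    psiAux l c T stat f q i u z (n+1) = ∑' a : ℕ×ℕ×Bool, w f q a *
      (if nxt c i u z a < 0 then 1
       else psiAux l c T stat f q (T i (stat a.1 a.2.1 a.2.2 z)) (nxt c i u z a)
         (if a.2.2 then a.2.1 else 0) n) := by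
  conv_lhs => rw [psiAux]
  rw [if_neg (not_lt.2 hu)]
  rw [← (consEquiv n).tsum_eq]
  -- pointwise identity
  have he : ∀ p : (ℕ×ℕ×Bool) × (Fin n → ℕ×ℕ×Bool),
      pathWeight f q (n+1) ((consEquiv n) p) *
        (if ruined l c T stat (n+1) ((consEquiv n) p) i u z then 1 else 0)
      = w f q p.1 * (pathWeight f q n p.2 *
          (if nxt c i u z p.1 < 0 then 1
           else if ruined l c T stat n p.2 (T i (stat p.1.1 p.1.2.1 p.1.2.2 z))
             (nxt c i u z p.1) (if p.1.2.2 then p.1.2.1 else 0) then 1 else 0)) := by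
    rintro ⟨a, ω⟩
    have h1 : (consEquiv n) (a, ω) = Fin.cons a ω := rfl
    rw [h1, pathWeight_cons, ruined_cons]
    by_cases hc : nxt c i u z a < 0
    · rw [if_pos hc, if_pos hc]
      simp [mul_assoc]
    · rw [if_neg hc, if_neg hc]
      ring
  simp_rw [he]
  have hs : Summable (fun p : (ℕ×ℕ×Bool) × (Fin n → ℕ×ℕ×Bool) =>
      w f q p.1 * (pathWeight f q n p.2 *
        (if nxt c i u z p.1 < 0 then 1
         else if ruined l c T stat n p.2 (T i (stat p.1.1 p.1.2.1 p.1.2.2 z))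
           (nxt c i u z p.1) (if p.1.2.2 then p.1.2.1 else 0) then 1 else 0))) := by
    apply Summable.of_nonneg_of_le (fun p => ?_) (fun p => ?_)
      (Summable.mul_of_nonneg (summable_w hfnn hfsum hq0 hq1)
        (summable_pathWeight hfnn hfsum hq0 hq1 n)
        (w_nonneg hfnn hq0 hq1) (pathWeight_nonneg hfnn hq0 hq1 n))
    · exact mul_nonneg (w_nonneg hfnn hq0 hq1 _)
        (mul_nonneg (pathWeight_nonneg hfnn hq0 hq1 n _) ite_nn2)
    · have hb : (if nxt c i u z p.1 < 0 then (1:ℝ)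
         else if ruined l c T stat n p.2 (T i (stat p.1.1 p.1.2.1 p.1.2.2 z))
           (nxt c i u z p.1) (if p.1.2.2 then p.1.2.1 else 0) then 1 else 0) ≤ 1 := ite_le2
      calc w f q p.1 * (pathWeight f q n p.2 * _) ≤ w f q p.1 * (pathWeight f q n p.2 * 1) := by
            apply mul_le_mul_of_nonneg_left _ (w_nonneg hfnn hq0 hq1 _)
            exact mul_le_mul_of_nonneg_left hb (pathWeight_nonneg hfnn hq0 hq1 n _)
        _ = w f q p.1 * pathWeight f q n p.2 := by ring
  rw [Summable.tsum_prod' hs ?_]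
  · apply tsum_congr
    intro a
    dsimp only
    rw [tsum_mul_left]
    congr 1
    by_cases hc : nxt c i u z a < 0
    · simp only [if_pos hc]
      simp_rw [mul_one]
      exact tsum_pathWeight hfnn hfsum hq0 hq1 n
    · simp only [if_neg hc]
      rw [psiAux, if_neg hc]
  · intro a
    dsimp only
    by_cases hc : nxt c i u z a < 0
    · simp only [if_pos hc]
      simp_rw [mul_one]
      exact (summable_pathWeight hfnn hfsum hq0 hq1 n).mul_left _
    · simp only [if_neg hc]
      exact (summable_pw_ind hfnn hfsum hq0 hq1 n _).mul_left _


lemma ruined_statRep_shift : ∀ (n : ℕ) (ω : Fin n → ℕ×ℕ×Bool) (j : Fin l) (u : ℤ) (carry : ℕ),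
    ruined l c T statRep n ω j u carry = ruined l c T statRep n ω j (u - (carry:ℤ)) 0
  | 0, _, _, _, _ => rfl
  | (n+1), ω, j, u, carry => by
    simp only [ruined, statRep]
    have h : u - (carry:ℤ) + (c j:ℤ) - (((ω 0).1:ℤ)
          + (if (ω 0).2.2 then 0 else ((ω 0).2.1:ℤ)) + ((0:ℕ):ℤ))
        = u + (c j:ℤ) - (((ω 0).1:ℤ)
          + (if (ω 0).2.2 then 0 else ((ω 0).2.1:ℤ)) + (carry:ℤ)) := by push_cast; ring
    rw [h]

lemma psiAux_statRep_shift₁ (j : Fin l) (a b : ℕ) (hba : b ≤ a) (n : ℕ) :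
    psiAux l c T statRep f q j (a:ℤ) b n = psiAux l c T statRep f q j ((a - b : ℕ):ℤ) 0 n := by
  rw [psiAux, psiAux, if_neg (by omega), if_neg (by omega)]
  apply tsum_congr; intro ω
  rw [ruined_statRep_shift, ruined_statRep_shift n ω j ((a - b : ℕ):ℤ) 0,
    show ((a - b : ℕ):ℤ) - ((0:ℕ):ℤ) = (a:ℤ) - (b:ℤ) by omega]

lemma psiAux_statRep_shift₂ (j : Fin l) (a b : ℕ) (hab : a ≤ b) (n : ℕ) :
    psiAux l c T statRep f q j (a:ℤ) b n = psiAux l c T statRep f q j 0 (b - a) n := by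
  rw [psiAux, psiAux, if_neg (by omega), if_neg (by norm_num)]
  apply tsum_congr; intro ω
  rw [ruined_statRep_shift, ruined_statRep_shift n ω j 0 (b - a),
    show (0:ℤ) - ((b - a : ℕ):ℤ) = (a:ℤ) - (b:ℤ) by omega]

lemma psiAux_high (hfnn : ∀ x y, 0 ≤ f x y) (hfsum : ∑' p : ℕ × ℕ, f p.1 p.2 = 1)
    (hq0 : 0 ≤ q) (hq1 : q ≤ 1) (j : Fin l) (y : ℕ) (hy : c j < y) (n : ℕ) (hn : 1 ≤ n) :
    psiAux l c T stat f q j 0 y n = 1 := by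
  obtain ⟨k, rfl⟩ : ∃ k, n = k + 1 := ⟨n - 1, by omega⟩
  rw [psiAux, if_neg (by norm_num)]
  have hr : ∀ ω : Fin (k+1) → ℕ×ℕ×Bool, ruined l c T stat (k+1) ω j 0 y = true := by
    intro ω
    simp only [ruined]
    have h1 : (0:ℤ) ≤ ((ω 0).1:ℤ) := Int.natCast_nonneg _
    have h2 : (0:ℤ) ≤ (if (ω 0).2.2 then 0 else ((ω 0).2.1:ℤ)) := by
      split
      · norm_num
      · exact Int.natCast_nonneg _
    rw [if_pos (by omega)]
  have hcongr : ∀ ω : Fin (k+1) → ℕ×ℕ×Bool,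
      pathWeight f q (k+1) ω * (if ruined l c T stat (k+1) ω j 0 y then 1 else 0)
        = pathWeight f q (k+1) ω := by
    intro ω; rw [hr ω]; simp
  rw [tsum_congr hcongr]
  exact tsum_pathWeight hfnn hfsum hq0 hq1 (k+1)

end Master


section Comb
variable {f : ℕ → ℕ → ℝ} {q : ℝ}

lemma xi_nonneg (hfnn : ∀ x y, 0 ≤ f x y) (y m : ℕ) : 0 ≤ xi f y m :=
  Finset.sum_nonneg fun x _ => hfnn _ _

lemma summable_xi (hfsum : ∑' p : ℕ × ℕ, f p.1 p.2 = 1) (m : ℕ) :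
    Summable (fun y => xi f y m) := by
  unfold xi
  apply summable_sum
  intro x hx
  have hxm : x ≤ m := (Finset.mem_Icc.1 hx).2
  have : (fun y => f x (y + m - x)) = (fun y => f x (y + (m - x))) := by
    funext y; congr 1; omega
  rw [this]
  exact (summable_fx hfsum x).comp_injective fun a b h => by omega

lemma L4 (hfnn : ∀ x y, 0 ≤ f x y) (hfsum : ∑' p : ℕ × ℕ, f p.1 p.2 = 1) (m : ℕ) :
    ∑' p : ℕ×ℕ, (if m < p.1 then f p.1 p.2 else 0) = ∑' k : ℕ, fX f (m+1+k) := by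
  have hsum : Summable (fun p : ℕ×ℕ => if m < p.1 then f p.1 p.2 else 0) := by
    apply Summable.of_nonneg_of_le (fun p => by split; exacts [hfnn _ _, le_refl 0])
      (fun p => by split; exacts [le_refl _, hfnn _ _]) (summable_f2 hfsum)
  rw [Summable.tsum_prod' hsum (fun x => by
    by_cases h : m < x
    · simpa [h] using summable_fx hfsum x
    · simpa [h] using summable_zero)]
  have h1 : ∀ x : ℕ, ∑' y, (if m < x then f x y else 0) = (if m < x then fX f x else 0) := by
    intro x; by_cases h : m < x <;> simp [h, fX]
  rw [tsum_congr h1]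
  calc ∑' x, (if m < x then fX f x else 0)
      = ∑' k, (if m < m+1+k then fX f (m+1+k) else 0) := by
        refine (Function.Injective.tsum_eq (g := fun k => m+1+k)
          (fun a b h => by dsimp only at h; omega) ?_).symm
        intro x hx
        rw [Function.mem_support] at hx
        have hmx : m < x := by by_contra hc; exact hx (if_neg hc)
        exact ⟨x - m - 1, by dsimp only; omega⟩
    _ = ∑' k, fX f (m+1+k) := tsum_congr fun k => if_pos (by omega)

lemma L5core (hfnn : ∀ x y, 0 ≤ f x y) (hfsum : ∑' p : ℕ × ℕ, f p.1 p.2 = 1)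
    (hfdeg : ∀ y : ℕ, 0 < y → f 0 y = 0) (m : ℕ)
    (Ψ : ℕ → ℝ) (hΨ0 : ∀ k, 0 ≤ Ψ k) (hΨ1 : ∀ k, Ψ k ≤ 1) :
    ∑' p : ℕ×ℕ, (if p.1 ≤ m ∧ m < p.1 + p.2 then f p.1 p.2 * Ψ (p.2 - (m - p.1)) else 0)
      = ∑' k : ℕ, xi f (k+1) m * Ψ (k+1) := by
  have hle : ∀ p : ℕ×ℕ, (if p.1 ≤ m ∧ m < p.1 + p.2 then f p.1 p.2 * Ψ (p.2 - (m - p.1)) else 0)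
      ≤ f p.1 p.2 := by
    intro p; split
    · calc f p.1 p.2 * Ψ _ ≤ f p.1 p.2 * 1 := mul_le_mul_of_nonneg_left (hΨ1 _) (hfnn _ _)
        _ = f p.1 p.2 := mul_one _
    · exact hfnn _ _
  have hnn : ∀ p : ℕ×ℕ, 0 ≤ (if p.1 ≤ m ∧ m < p.1 + p.2 then f p.1 p.2 * Ψ (p.2 - (m - p.1)) else 0) := by
    intro p; split
    · exact mul_nonneg (hfnn _ _) (hΨ0 _)
    · exact le_refl 0
  have hsum : Summable (fun p : ℕ×ℕ =>
      if p.1 ≤ m ∧ m < p.1 + p.2 then f p.1 p.2 * Ψ (p.2 - (m - p.1)) else 0) :=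
    Summable.of_nonneg_of_le hnn hle (summable_f2 hfsum)
  have hsumx : ∀ x : ℕ, Summable (fun y =>
      if x ≤ m ∧ m < x + y then f x y * Ψ (y - (m - x)) else 0) := by
    intro x
    apply Summable.of_nonneg_of_le (fun y => hnn (x, y)) (fun y => hle (x, y))
      (summable_fx hfsum x)
  rw [Summable.tsum_prod' hsum hsumx]
  -- inner sums
  have hinner : ∀ x : ℕ, (∑' y, if x ≤ m ∧ m < x + y then f x y * Ψ (y - (m - x)) else 0)
      = (if x ≤ m then ∑' k, f x (m - x + 1 + k) * Ψ (k+1) else 0) := by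
    intro x
    by_cases hx : x ≤ m
    · rw [if_pos hx]
      refine (Function.Injective.tsum_eq (g := fun k => m - x + 1 + k)
        (fun a b h => by dsimp only at h; omega) ?_).symm.trans ?_
      · intro y hy
        rw [Function.mem_support] at hy
        have hcond : x ≤ m ∧ m < x + y := by by_contra hc; exact hy (if_neg hc)
        exact ⟨y - (m - x) - 1, by dsimp only; omega⟩
      · apply tsum_congr
        intro k
        rw [if_pos ⟨hx, by omega⟩]
        congr 2
        omega
    · rw [if_neg hx]
      convert tsum_zero with y
      rw [if_neg]; intro ⟨h1, _⟩; exact hx h1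
  rw [tsum_congr hinner]
  -- restrict to finite sum
  rw [tsum_eq_sum (s := Finset.range (m+1))
    (by intro x hx; rw [if_neg]; intro h; exact hx (Finset.mem_range.2 (by omega)))]
  have hfin : ∀ x ∈ Finset.range (m+1),
      (if x ≤ m then ∑' k, f x (m - x + 1 + k) * Ψ (k+1) else 0)
        = ∑' k, f x (m - x + 1 + k) * Ψ (k+1) := by
    intro x hx
    rw [if_pos (by have := Finset.mem_range.1 hx; omega)]
  rw [Finset.sum_congr rfl hfin]
  rw [← Summable.tsum_finsetSum (by
    intro x hx
    apply Summable.of_nonneg_of_le (fun k => mul_nonneg (hfnn _ _) (hΨ0 _))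
      (fun k => by calc f x (m-x+1+k) * Ψ (k+1) ≤ f x (m-x+1+k) * 1 :=
          mul_le_mul_of_nonneg_left (hΨ1 _) (hfnn _ _)
        _ = f x (m-x+1+k) := mul_one _)
    exact (summable_fx hfsum x).comp_injective fun a b h => by omega)]
  apply tsum_congr
  intro k
  rw [xi, Finset.sum_mul]
  have hins : Finset.range (m+1) = insert 0 (Finset.Icc 1 m) := by
    ext a; simp only [Finset.mem_range, Finset.mem_insert, Finset.mem_Icc]; omega
  rw [hins, Finset.sum_insert (by simp)]
  have h0 : f 0 (m - 0 + 1 + k) * Ψ (k+1) = 0 := by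
    rw [hfdeg _ (by omega), zero_mul]
  rw [h0, zero_add]
  apply Finset.sum_congr rfl
  intro x hx
  have hxm := Finset.mem_Icc.1 hx
  congr 2
  omega

lemma L5 (hfnn : ∀ x y, 0 ≤ f x y) (hfsum : ∑' p : ℕ × ℕ, f p.1 p.2 = 1)
    (hfdeg : ∀ y : ℕ, 0 < y → f 0 y = 0) (m : ℕ) :
    ∑' p : ℕ×ℕ, (if p.1 ≤ m ∧ m < p.1 + p.2 then f p.1 p.2 else 0)
      = ∑' k : ℕ, xi f (k+1) m := by
  have := L5core hfnn hfsum hfdeg m (fun _ => 1) (fun _ => by norm_num) (fun _ => le_refl 1)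
  simpa using this


section Parts
variable {f : ℕ → ℕ → ℝ} {q : ℝ} {l : ℕ} {c : Fin l → ℕ} {T : Fin l → ℕ → Fin l}

lemma partA (hfnn : ∀ x y, 0 ≤ f x y)
    (t : Fin l → Fin l → ℕ → ℝ)
    (hT : ∀ i j s, t i j s = if j = T i s then (1 : ℝ) else 0)
    (i : Fin l) (m n : ℕ) :
    ∑' k : ℕ, (if k+1 ≤ c (T i (m+(k+1)))
        then xi f (k+1) m * psiAux l c T statRep f q (T i (m+(k+1))) 0 (k+1) n else 0)
      = ∑ j : Fin l, ∑ y ∈ Finset.Icc 1 (c j),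
          t i j (m+y) * psiAux l c T statRep f q j 0 y n * xi f y m := by
  classical
  set M := Finset.univ.sup c with hM
  have hcM : ∀ j : Fin l, c j ≤ M := fun j => Finset.le_sup (Finset.mem_univ j)
  set g : ℕ → ℝ := fun y => if y ≤ c (T i (m+y))
      then xi f y m * psiAux l c T statRep f q (T i (m+y)) 0 y n else 0 with hg
  have hL : (∑' k : ℕ, g (k+1)) = ∑ k ∈ Finset.range M, g (k+1) := by
    apply tsum_eq_sum
    intro k hk
    have hkM : M ≤ k := by
      by_contra hc'; exact hk (Finset.mem_range.2 (by omega))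
    rw [hg]
    dsimp only
    rw [if_neg (by have := hcM (T i (m+(k+1))); omega)]
  have hIcc : ∑ k ∈ Finset.range M, g (k+1) = ∑ y ∈ Finset.Icc 1 M, g y := by
    rw [show Finset.Icc 1 M = Finset.Ico 1 (M+1) from by rw [Finset.Ico_add_one_right_eq_Icc],
      Finset.sum_Ico_eq_sum_range]
    simp only [Nat.add_sub_cancel]
    exact Finset.sum_congr rfl fun k _ => by rw [Nat.add_comm 1 k]
  have hRj : ∀ j : Fin l, (∑ y ∈ Finset.Icc 1 (c j),
        t i j (m+y) * psiAux l c T statRep f q j 0 y n * xi f y m)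
      = ∑ y ∈ Finset.Icc 1 M, (if y ≤ c j
          then t i j (m+y) * psiAux l c T statRep f q j 0 y n * xi f y m else 0) := by
    intro j
    rw [Finset.sum_congr rfl (fun y hy =>
      (if_pos (Finset.mem_Icc.1 hy).2).symm)]
    apply Finset.sum_subset (Finset.Icc_subset_Icc_right (hcM j))
    intro y hy hyn
    rw [if_neg]
    have h1 := Finset.mem_Icc.1 hy
    intro hyc
    exact hyn (Finset.mem_Icc.2 ⟨h1.1, hyc⟩)
  calc ∑' k : ℕ, (if k+1 ≤ c (T i (m+(k+1)))
        then xi f (k+1) m * psiAux l c T statRep f q (T i (m+(k+1))) 0 (k+1) n else 0)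
      = ∑ y ∈ Finset.Icc 1 M, g y := by rw [← hIcc, ← hL]
    _ = ∑ y ∈ Finset.Icc 1 M, ∑ j : Fin l, (if y ≤ c j
          then t i j (m+y) * psiAux l c T statRep f q j 0 y n * xi f y m else 0) := by
        apply Finset.sum_congr rfl
        intro y _
        rw [Finset.sum_eq_single (T i (m+y))]
        · rw [hT, if_pos rfl, hg]
          dsimp only
          by_cases hy : y ≤ c (T i (m+y))
          · rw [if_pos hy, if_pos hy]; ring
          · rw [if_neg hy, if_neg hy]
        · intro j _ hj
          rw [hT, if_neg hj]
          split <;> ring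
        · intro h; exact absurd (Finset.mem_univ _) h
    _ = ∑ j : Fin l, ∑ y ∈ Finset.Icc 1 (c j),
          t i j (m+y) * psiAux l c T statRep f q j 0 y n * xi f y m := by
        rw [Finset.sum_comm]
        exact (Finset.sum_congr rfl fun j _ => (hRj j)).symm

lemma partB (hfnn : ∀ x y, 0 ≤ f x y) (hfsum : ∑' p : ℕ × ℕ, f p.1 p.2 = 1)
    (t : Fin l → Fin l → ℕ → ℝ)
    (hT : ∀ i j s, t i j s = if j = T i s then (1 : ℝ) else 0)
    (i : Fin l) (m : ℕ) :
    (∑ j : Fin l, ∑' k : ℕ, t i j (m+(c j+1+k)) * xi f (c j+1+k) m)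
      = ∑' k : ℕ, (if k+1 ≤ c (T i (m+(k+1))) then 0 else xi f (k+1) m) := by
  classical
  set G : Fin l → ℕ → ℝ := fun j y =>
    if j = T i (m+y) ∧ c j < y then xi f y m else 0 with hG
  have hGnn : ∀ j y, 0 ≤ G j y := by
    intro j y; rw [hG]; dsimp only; split
    exacts [xi_nonneg hfnn _ _, le_refl 0]
  have hGle : ∀ j y, G j y ≤ xi f y m := by
    intro j y; rw [hG]; dsimp only; split
    exacts [le_refl _, xi_nonneg hfnn _ _]
  have hGsum : ∀ j, Summable (G j) :=
    fun j => Summable.of_nonneg_of_le (hGnn j) (hGle j) (summable_xi hfsum m)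
  have h1 : ∀ j : Fin l, (∑' k : ℕ, t i j (m+(c j+1+k)) * xi f (c j+1+k) m)
      = ∑' y : ℕ, G j y := by
    intro j
    have h2 : ∀ k : ℕ, t i j (m+(c j+1+k)) * xi f (c j+1+k) m = G j (c j+1+k) := by
      intro k
      rw [hT, hG]
      dsimp only
      by_cases hj : j = T i (m+(c j+1+k))
      · rw [if_pos hj, if_pos ⟨hj, by omega⟩, one_mul]
      · rw [if_neg hj, if_neg (fun h => hj h.1), zero_mul]
    rw [tsum_congr h2]
    refine Function.Injective.tsum_eq (g := fun k => c j + 1 + k)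
      (fun a b h => by dsimp only at h; omega) ?_
    intro y hy
    rw [Function.mem_support] at hy
    have hcy : c j < y := by
      by_contra hc'
      exact hy (by rw [hG]; dsimp only; rw [if_neg (fun h => hc' h.2)])
    exact ⟨y - c j - 1, by dsimp only; omega⟩
  rw [Finset.sum_congr rfl fun j _ => h1 j]
  rw [← Summable.tsum_finsetSum (fun j _ => hGsum j)]
  have h3 : ∀ y : ℕ, (∑ j : Fin l, G j y)
      = (if c (T i (m+y)) < y then xi f y m else 0) := by
    intro y
    rw [Finset.sum_eq_single (T i (m+y))]
    · rw [hG]; dsimp only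
      by_cases hy : c (T i (m+y)) < y
      · rw [if_pos ⟨rfl, hy⟩, if_pos hy]
      · rw [if_neg (fun h => hy h.2), if_neg hy]
    · intro j _ hj
      rw [hG]; dsimp only
      rw [if_neg (fun h => hj h.1)]
    · intro h; exact absurd (Finset.mem_univ _) h
  rw [tsum_congr h3]
  refine (Function.Injective.tsum_eq (g := fun k => k + 1)
    (fun a b h => by dsimp only at h; omega) ?_).symm.trans ?_
  · intro y hy
    rw [Function.mem_support] at hy
    have hy0 : y ≠ 0 := by
      intro h0
      exact hy (by rw [h0, if_neg (by omega)])
    exact ⟨y - 1, by dsimp only; omega⟩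
  · apply tsum_congr
    intro k
    by_cases hk : k + 1 ≤ c (T i (m+(k+1)))
    · rw [if_neg (by omega), if_pos hk]
    · rw [if_pos (by omega), if_neg hk]


lemma tsum_triple {G : ℕ×ℕ×Bool → ℝ} (hG : Summable G) :
    ∑' a : ℕ×ℕ×Bool, G a = ∑' p : ℕ×ℕ, (G (p.1, p.2, false) + G (p.1, p.2, true)) := by
  rw [← (Equiv.prodAssoc ℕ ℕ Bool).tsum_eq G]
  have hs : Summable (fun p : (ℕ×ℕ)×Bool => G ((Equiv.prodAssoc ℕ ℕ Bool) p)) :=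
    (Equiv.prodAssoc ℕ ℕ Bool).summable_iff.2 hG
  rw [Summable.tsum_prod' hs (fun p => Summable.of_finite)]
  apply tsum_congr; intro p
  exact tsum_bool _

lemma psi_eq_psiAux (i : Fin l) (u : ℤ) (n : ℕ) :
    psi l c T statRep f q i u n = psiAux l c T statRep f q i u 0 n := rfl

lemma L1 (t : Fin l → Fin l → ℕ → ℝ)
    (hT : ∀ i j s, t i j s = if j = T i s then (1 : ℝ) else 0)
    (i : Fin l) (m n : ℕ) :
    ∑' p : ℕ×ℕ, (if p.1 + p.2 ≤ m
        then f p.1 p.2 * psiAux l c T statRep f q (T i (p.1+p.2)) ((m - p.1 - p.2 : ℕ):ℤ) 0 n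
        else 0)
      = ∑ j : Fin l, ∑ x ∈ Finset.range (m+1), ∑ y ∈ Finset.range (m - x + 1),
          t i j (x+y) * psi l c T statRep f q j ((m - x - y : ℕ):ℤ) n * f x y := by
  classical
  rw [tsum_eq_sum (s := (Finset.range (m+1)) ×ˢ (Finset.range (m+1))) (by
    intro p hp
    rw [if_neg]
    intro h
    apply hp
    rw [Finset.mem_product, Finset.mem_range, Finset.mem_range]
    omega)]
  rw [Finset.sum_product]
  have hx1 : ∀ x ∈ Finset.range (m+1),
      (∑ y ∈ Finset.range (m+1), (if x + y ≤ m
        then f x y * psiAux l c T statRep f q (T i (x+y)) ((m - x - y : ℕ):ℤ) 0 n else 0))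
      = ∑ y ∈ Finset.range (m - x + 1),
          (f x y * psiAux l c T statRep f q (T i (x+y)) ((m - x - y : ℕ):ℤ) 0 n) := by
    intro x hx
    have hxm := Finset.mem_range.1 hx
    rw [← Finset.sum_subset (Finset.range_subset_range.2 (by omega : m - x + 1 ≤ m + 1)) (by
      intro y hy hyn
      rw [if_neg]
      have := Finset.mem_range.1 hy
      have h2 : ¬ (y < m - x + 1) := fun hc => hyn (Finset.mem_range.2 hc)
      omega)]
    apply Finset.sum_congr rfl
    intro y hy
    rw [if_pos (by have := Finset.mem_range.1 hy; omega)]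
  rw [Finset.sum_congr rfl hx1]
  have hx2 : ∀ x ∈ Finset.range (m+1), ∀ y ∈ Finset.range (m - x + 1),
      f x y * psiAux l c T statRep f q (T i (x+y)) ((m - x - y : ℕ):ℤ) 0 n
        = ∑ j : Fin l, t i j (x+y) * psi l c T statRep f q j ((m - x - y : ℕ):ℤ) n * f x y := by
    intro x _ y _
    rw [Finset.sum_eq_single (T i (x+y))]
    · rw [hT, if_pos rfl, psi_eq_psiAux]; ring
    · intro j _ hj
      rw [hT, if_neg hj]; ring
    · intro h; exact absurd (Finset.mem_univ _) h
  rw [Finset.sum_congr rfl (fun x hx => Finset.sum_congr rfl (fun y hy => hx2 x hx y hy))]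
  rw [Finset.sum_comm]
  apply Finset.sum_congr rfl
  intro j _
  rw [Finset.sum_comm]

end Parts

end Comb


set_option maxHeartbeats 2000000 in
/-- Corollary 1: recursion for ψ'_i(0; z, ·) when premiums are adjusted according to
aggregate reported claims. -/
theorem corollary1_reported_aggregate
    (l : ℕ) (c : Fin l → ℕ) (hcpos : ∀ i, 0 < c i) (hcmono : StrictMono c)
    (f : ℕ → ℕ → ℝ) (hfnn : ∀ x y, 0 ≤ f x y)
    (hfsum : ∑' p : ℕ × ℕ, f p.1 p.2 = 1)
    (hfdeg : ∀ y : ℕ, 0 < y → f 0 y = 0)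
    (q : ℝ) (hq0 : 0 ≤ q) (hq1 : q ≤ 1)
    (t : Fin l → Fin l → ℕ → ℝ) (T : Fin l → ℕ → Fin l)
    (hT : ∀ i j s, t i j s = if j = T i s then (1 : ℝ) else 0)
    (i : Fin l) (z : ℕ) (hz1 : 0 < z) (hz2 : z ≤ c i) (n : ℕ) (hn : 1 ≤ n) :
    psiAux l c T statRep f q i 0 z (n + 1) =
        (∑ j : Fin l, ∑ x ∈ Finset.range (c i - z + 1), ∑ y ∈ Finset.range (c i - z - x + 1),
          t i j (x + y) * psi l c T statRep f q j ((c i - z - x - y : ℕ) : ℤ) n * f x y)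
      + q * (∑ j : Fin l, ∑ y ∈ Finset.Icc 1 (c j),
          t i j (c i - z + y) * psiAux l c T statRep f q j 0 y n * xi f y (c i - z))
      + q * (∑ j : Fin l, ∑' k : ℕ,
          t i j (c i - z + (c j + 1 + k)) * xi f (c j + 1 + k) (c i - z))
      + (1 - q) * (∑' k : ℕ, xi f (k + 1) (c i - z))
      + (∑' k : ℕ, fX f (c i - z + 1 + k)) ∧
    psiAux l c T statRep f q i 0 z 1 =
      (1 - q) * (∑' k : ℕ, xi f (k + 1) (c i - z))
      + (∑' k : ℕ, fX f (c i - z + 1 + k)) := by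
  classical
  have hq1' : (0:ℝ) ≤ 1 - q := by linarith
  set m := c i - z with hm
  -- nxt computations
  have hnF : ∀ x y : ℕ, nxt c i 0 z (x, y, false) = (m:ℤ) - (x + y) := by
    intro x y
    simp only [nxt, Bool.false_eq_true, if_false]
    omega
  have hnT : ∀ x y : ℕ, nxt c i 0 z (x, y, true) = (m:ℤ) - x := by
    intro x y
    simp only [nxt, if_true]
    omega
  have hwF : ∀ x y : ℕ, w f q (x, y, false) = f x y * (1 - q) := by
    intro x y; simp [w]
  have hwT : ∀ x y : ℕ, w f q (x, y, true) = f x y * q := by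
    intro x y; simp [w]
  -- pieces
  set Q5 : ℕ×ℕ → ℝ := fun p => if p.1 ≤ m ∧ m < p.1 + p.2 then f p.1 p.2 else 0 with hQ5
  set Q4 : ℕ×ℕ → ℝ := fun p => if m < p.1 then f p.1 p.2 else 0 with hQ4
  have SQ5 : Summable Q5 := by
    apply Summable.of_nonneg_of_le (fun p => ?_) (fun p => ?_) (summable_f2 hfsum)
    · rw [hQ5]; dsimp only; split; exacts [hfnn _ _, le_refl 0]
    · rw [hQ5]; dsimp only; split; exacts [le_refl _, hfnn _ _]
  have SQ4 : Summable Q4 := by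
    apply Summable.of_nonneg_of_le (fun p => ?_) (fun p => ?_) (summable_f2 hfsum)
    · rw [hQ4]; dsimp only; split; exacts [hfnn _ _, le_refl 0]
    · rw [hQ4]; dsimp only; split; exacts [le_refl _, hfnn _ _]
  have EQ5 : ∑' p, Q5 p = ∑' k : ℕ, xi f (k+1) m := L5 hfnn hfsum hfdeg m
  have EQ4 : ∑' p, Q4 p = ∑' k : ℕ, fX f (m+1+k) := L4 hfnn hfsum m
  constructor
  · -- main part
    set Ψ : ℕ → ℝ := fun k => psiAux l c T statRep f q (T i (m+k)) 0 k n with hΨ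
    have hΨ0 : ∀ k, 0 ≤ Ψ k := fun k => psiAux_nonneg hfnn hq0 hq1 _ _ _ _
    have hΨ1 : ∀ k, Ψ k ≤ 1 := fun k => psiAux_le_one hfnn hfsum hq0 hq1 _ _ _ _
    set P1 : ℕ×ℕ → ℝ := fun p => if p.1 + p.2 ≤ m
        then f p.1 p.2 * psiAux l c T statRep f q (T i (p.1+p.2)) ((m - p.1 - p.2 : ℕ):ℤ) 0 n
        else 0 with hP1
    set Q3 : ℕ×ℕ → ℝ := fun p => if p.1 ≤ m ∧ m < p.1 + p.2
        then f p.1 p.2 * psiAux l c T statRep f q (T i (p.1+p.2)) 0 (p.2 - (m - p.1)) n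
        else 0 with hQ3
    have SP1 : Summable P1 := by
      apply Summable.of_nonneg_of_le (fun p => ?_) (fun p => ?_) (summable_f2 hfsum)
      · rw [hP1]; dsimp only; split
        · exact mul_nonneg (hfnn _ _) (psiAux_nonneg hfnn hq0 hq1 _ _ _ _)
        · exact le_refl 0
      · rw [hP1]; dsimp only; split
        · calc f p.1 p.2 * psiAux l c T statRep f q _ _ 0 n ≤ f p.1 p.2 * 1 :=
              mul_le_mul_of_nonneg_left (psiAux_le_one hfnn hfsum hq0 hq1 _ _ _ _) (hfnn _ _)
            _ = f p.1 p.2 := mul_one _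
        · exact hfnn _ _
    have SQ3 : Summable Q3 := by
      apply Summable.of_nonneg_of_le (fun p => ?_) (fun p => ?_) (summable_f2 hfsum)
      · rw [hQ3]; dsimp only; split
        · exact mul_nonneg (hfnn _ _) (psiAux_nonneg hfnn hq0 hq1 _ _ _ _)
        · exact le_refl 0
      · rw [hQ3]; dsimp only; split
        · calc f p.1 p.2 * psiAux l c T statRep f q _ _ _ n ≤ f p.1 p.2 * 1 :=
              mul_le_mul_of_nonneg_left (psiAux_le_one hfnn hfsum hq0 hq1 _ _ _ _) (hfnn _ _)
            _ = f p.1 p.2 := mul_one _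
        · exact hfnn _ _
    rw [psiAux_succ hfnn hfsum hq0 hq1 i 0 le_rfl z n]
    set G : ℕ×ℕ×Bool → ℝ := fun a => w f q a *
      (if nxt c i 0 z a < 0 then 1
       else psiAux l c T statRep f q (T i (statRep a.1 a.2.1 a.2.2 z)) (nxt c i 0 z a)
         (if a.2.2 then a.2.1 else 0) n) with hG
    have SG : Summable G := by
      apply Summable.of_nonneg_of_le (fun a => ?_) (fun a => ?_)
        (summable_w hfnn hfsum hq0 hq1)
      · rw [hG]; dsimp only
        apply mul_nonneg (w_nonneg hfnn hq0 hq1 _)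
        split
        · norm_num
        · exact psiAux_nonneg hfnn hq0 hq1 _ _ _ _
      · rw [hG]; dsimp only
        have hb : (if nxt c i 0 z a < 0 then (1:ℝ)
            else psiAux l c T statRep f q (T i (statRep a.1 a.2.1 a.2.2 z)) (nxt c i 0 z a)
              (if a.2.2 then a.2.1 else 0) n) ≤ 1 := by
          split
          · norm_num
          · exact psiAux_le_one hfnn hfsum hq0 hq1 _ _ _ _
        calc w f q a * _ ≤ w f q a * 1 :=
            mul_le_mul_of_nonneg_left hb (w_nonneg hfnn hq0 hq1 a)
          _ = w f q a := mul_one _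
    rw [tsum_triple SG]
    have key : ∀ p : ℕ×ℕ, G (p.1, p.2, false) + G (p.1, p.2, true)
        = P1 p + ((1-q) * Q5 p + (q * Q3 p + Q4 p)) := by
      rintro ⟨x, y⟩
      rw [hG, hP1, hQ3, hQ5, hQ4]
      dsimp only
      rw [hnF, hnT, hwF, hwT]
      have hsF : statRep x y false z = x + y := rfl
      have hsT : statRep x y true z = x + y := rfl
      rw [hsF, hsT]
      simp only [Bool.false_eq_true, if_false, if_true]
      by_cases h1 : x + y ≤ m
      · have h2 : x ≤ m := by omega
        rw [if_neg (by omega : ¬ (m:ℤ) - (x + y) < 0),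
          if_neg (by omega : ¬ (m:ℤ) - x < 0),
          if_pos h1, if_neg (by omega : ¬ (x ≤ m ∧ m < x + y)),
          if_neg (by omega : ¬ (x ≤ m ∧ m < x + y)), if_neg (by omega : ¬ m < x)]
        rw [show (m:ℤ) - (x + y) = ((m - x - y : ℕ):ℤ) from by omega,
          show (m:ℤ) - x = ((m - x : ℕ):ℤ) from by omega,
          psiAux_statRep_shift₁ (T i (x+y)) (m - x) y (by omega) n]
        rw [show (m - x) - y = m - x - y from rfl]
        ring
      · by_cases h2 : x ≤ m
        · rw [if_pos (by omega : (m:ℤ) - (x + y) < 0),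
            if_neg (by omega : ¬ (m:ℤ) - x < 0),
            if_neg h1, if_pos (⟨h2, by omega⟩ : x ≤ m ∧ m < x + y),
            if_pos (⟨h2, by omega⟩ : x ≤ m ∧ m < x + y), if_neg (by omega : ¬ m < x)]
          rw [show (m:ℤ) - x = ((m - x : ℕ):ℤ) from by omega,
            psiAux_statRep_shift₂ (T i (x+y)) (m - x) y (by omega) n]
          ring
        · rw [if_pos (by omega : (m:ℤ) - (x + y) < 0),
            if_pos (by omega : (m:ℤ) - x < 0),
            if_neg h1, if_neg (by omega : ¬ (x ≤ m ∧ m < x + y)),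
            if_neg (by omega : ¬ (x ≤ m ∧ m < x + y)), if_pos (by omega : m < x)]
          ring
    rw [tsum_congr key]
    rw [Summable.tsum_add SP1 (Summable.add (SQ5.mul_left (1-q)) (Summable.add (SQ3.mul_left q) SQ4))]
    rw [Summable.tsum_add (SQ5.mul_left (1-q)) (Summable.add (SQ3.mul_left q) SQ4)]
    rw [Summable.tsum_add (SQ3.mul_left q) SQ4]
    rw [tsum_mul_left, tsum_mul_left]
    -- evaluate pieces
    have E1 : ∑' p, P1 p = ∑ j : Fin l, ∑ x ∈ Finset.range (m+1), ∑ y ∈ Finset.range (m - x + 1),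
        t i j (x+y) * psi l c T statRep f q j ((m - x - y : ℕ):ℤ) n * f x y := L1 t hT i m n
    have E3 : ∑' p, Q3 p = ∑' k : ℕ, xi f (k+1) m * Ψ (k+1) := by
      have hc3 : ∀ p : ℕ×ℕ, Q3 p = (if p.1 ≤ m ∧ m < p.1 + p.2
          then f p.1 p.2 * Ψ (p.2 - (m - p.1)) else 0) := by
        rintro ⟨x, y⟩
        rw [hQ3, hΨ]
        dsimp only
        by_cases hc : x ≤ m ∧ m < x + y
        · rw [if_pos hc, if_pos hc]
          congr 3
          omega
        · rw [if_neg hc, if_neg hc]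
      rw [tsum_congr hc3]
      exact L5core hfnn hfsum hfdeg m Ψ hΨ0 hΨ1
    have Esplit : ∑' k : ℕ, xi f (k+1) m * Ψ (k+1)
        = (∑' k : ℕ, (if k+1 ≤ c (T i (m+(k+1)))
            then xi f (k+1) m * psiAux l c T statRep f q (T i (m+(k+1))) 0 (k+1) n else 0))
          + ∑' k : ℕ, (if k+1 ≤ c (T i (m+(k+1))) then 0 else xi f (k+1) m) := by
      have hpt : ∀ k : ℕ, xi f (k+1) m * Ψ (k+1)
          = (if k+1 ≤ c (T i (m+(k+1)))
              then xi f (k+1) m * psiAux l c T statRep f q (T i (m+(k+1))) 0 (k+1) n else 0)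
            + (if k+1 ≤ c (T i (m+(k+1))) then 0 else xi f (k+1) m) := by
        intro k
        by_cases hk : k+1 ≤ c (T i (m+(k+1)))
        · rw [if_pos hk, if_pos hk, add_zero, hΨ]
        · rw [if_neg hk, if_neg hk, zero_add, hΨ]
          dsimp only
          rw [psiAux_high hfnn hfsum hq0 hq1 _ _ (by omega) n hn, mul_one]
      rw [tsum_congr hpt]
      have Sxis : Summable (fun k : ℕ => xi f (k+1) m) :=
        (summable_xi hfsum m).comp_injective (fun a b h => by omega)
      apply Summable.tsum_add
      · apply Summable.of_nonneg_of_le (fun k => ?_) (fun k => ?_) Sxis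
        · split
          · exact mul_nonneg (xi_nonneg hfnn _ _) (psiAux_nonneg hfnn hq0 hq1 _ _ _ _)
          · exact le_refl 0
        · split
          · calc xi f (k+1) m * psiAux l c T statRep f q _ _ _ n ≤ xi f (k+1) m * 1 :=
                mul_le_mul_of_nonneg_left (psiAux_le_one hfnn hfsum hq0 hq1 _ _ _ _)
                  (xi_nonneg hfnn _ _)
              _ = xi f (k+1) m := mul_one _
          · exact xi_nonneg hfnn _ _
      · apply Summable.of_nonneg_of_le (fun k => ?_) (fun k => ?_) Sxis
        · split; exacts [le_refl 0, xi_nonneg hfnn _ _]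
        · split; exacts [xi_nonneg hfnn _ _, le_refl _]
    have EA : (∑' k : ℕ, (if k+1 ≤ c (T i (m+(k+1)))
          then xi f (k+1) m * psiAux l c T statRep f q (T i (m+(k+1))) 0 (k+1) n else 0))
        = ∑ j : Fin l, ∑ y ∈ Finset.Icc 1 (c j),
            t i j (m+y) * psiAux l c T statRep f q j 0 y n * xi f y m :=
      partA hfnn t hT i m n
    have EB : (∑ j : Fin l, ∑' k : ℕ, t i j (m+(c j+1+k)) * xi f (c j+1+k) m)
        = ∑' k : ℕ, (if k+1 ≤ c (T i (m+(k+1))) then 0 else xi f (k+1) m) :=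
      partB hfnn hfsum t hT i m
    rw [E1, E3, Esplit, EA, ← EB, EQ5, EQ4]
    ring
  · -- horizon 1
    rw [psiAux_succ hfnn hfsum hq0 hq1 i 0 le_rfl z 0]
    have hred : ∀ a : ℕ×ℕ×Bool, w f q a *
        (if nxt c i 0 z a < 0 then 1
         else psiAux l c T statRep f q (T i (statRep a.1 a.2.1 a.2.2 z)) (nxt c i 0 z a)
           (if a.2.2 then a.2.1 else 0) 0)
        = w f q a * (if nxt c i 0 z a < 0 then 1 else 0) := by
      intro a
      congr 1
      by_cases hc : nxt c i 0 z a < 0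
      · rw [if_pos hc, if_pos hc]
      · rw [if_neg hc, if_neg hc, psiAux_zero _ _ (not_lt.1 hc) _]
    rw [tsum_congr hred]
    set G0 : ℕ×ℕ×Bool → ℝ := fun a => w f q a * (if nxt c i 0 z a < 0 then 1 else 0) with hG0
    have SG0 : Summable G0 := by
      apply Summable.of_nonneg_of_le (fun a => ?_) (fun a => ?_)
        (summable_w hfnn hfsum hq0 hq1)
      · rw [hG0]; dsimp only
        exact mul_nonneg (w_nonneg hfnn hq0 hq1 _) ite_nn1
      · rw [hG0]; dsimp only
        calc w f q a * _ ≤ w f q a * 1 :=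
            mul_le_mul_of_nonneg_left ite_le1' (w_nonneg hfnn hq0 hq1 a)
          _ = w f q a := mul_one _
    rw [tsum_triple SG0]
    have key0 : ∀ p : ℕ×ℕ, G0 (p.1, p.2, false) + G0 (p.1, p.2, true)
        = (1-q) * Q5 p + Q4 p := by
      rintro ⟨x, y⟩
      rw [hG0, hQ5, hQ4]
      dsimp only
      rw [hnF, hnT, hwF, hwT]
      by_cases h2 : x ≤ m
      · by_cases h1 : x + y ≤ m
        · rw [if_neg (by omega : ¬ (m:ℤ) - (x + y) < 0),
            if_neg (by omega : ¬ (m:ℤ) - x < 0),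
            if_neg (by omega : ¬ (x ≤ m ∧ m < x + y)), if_neg (by omega : ¬ m < x)]
          ring
        · rw [if_pos (by omega : (m:ℤ) - (x + y) < 0),
            if_neg (by omega : ¬ (m:ℤ) - x < 0),
            if_pos (⟨h2, by omega⟩ : x ≤ m ∧ m < x + y), if_neg (by omega : ¬ m < x)]
          ring
      · rw [if_pos (by omega : (m:ℤ) - (x + y) < 0),
          if_pos (by omega : (m:ℤ) - x < 0),
          if_neg (by omega : ¬ (x ≤ m ∧ m < x + y)), if_pos (by omega : m < x)]
        ring
    rw [tsum_congr key0]
    rw [Summable.tsum_add (SQ5.mul_left (1-q)) SQ4, tsum_mul_left, EQ5, EQ4]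


end DelayedClaims
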